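/- Let N ≥ 3 be odd and 0 ≤ γ ≤ 1, and let Γ be the N×N circulant matrix with entries Γ_{ij} = γ^{min(|i−j|, N−|i−j|)}. Then Γ is positive semidefinite. (Key estimates: 1 + γ ≥ 2γ^{(N+1)/2} for all γ ∈ [0,1] with equality only at γ = 1, and 1 + γ² − 2γ cos θ ≥ (1−γ)² ≥ 0 for all θ.) -/

import Mathlib

open Finset Complex

lemma key_pow_est (γ : ℝ) (h0 : 0 ≤ γ) (h1 : γ ≤ 1) (m : ℕ) (hm : 1 ≤ m) :
    2 * γ ^ m ≤ 1 + γ := by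
  have h2 : γ ^ m ≤ γ ^ 1 := pow_le_pow_of_le_one h0 h1 hm
  simpa using by nlinarith

lemma pair_lemma (N : ℕ) (hN : 0 < N) (γ : ℝ) (j j' : Fin N) :
    ∑ d ∈ Finset.range N, ((γ ^ min d (N - d) : ℝ) : ℂ) *
      (if (N : ℤ) ∣ ((d : ℤ) + j.val - j'.val) then (N : ℂ) else 0)
    = (N : ℂ) * ((γ ^ min (((j.val : ℤ) - (j'.val : ℤ)).natAbs)
        (N - (((j.val : ℤ) - (j'.val : ℤ)).natAbs)) : ℝ) : ℂ) := by
  have hj := j.isLt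
  have hj' := j'.isLt
  set d0 : ℕ := if j.val ≤ j'.val then j'.val - j.val else N - (j.val - j'.val) with hd0def
  have hd0lt : d0 < N := by simp only [hd0def]; split <;> omega
  have hdvd_iff : ∀ d : ℕ, d < N → (((N : ℤ) ∣ ((d : ℤ) + j.val - j'.val)) ↔ d = d0) := by
    intro d hd
    constructor
    · rintro ⟨q, hq⟩
      have hq0 : 0 ≤ q := by
        by_contra hc
        push_neg at hc
        have h1 : q ≤ -1 := by omega
        have := mul_le_mul_of_nonneg_left h1 (by positivity : (0:ℤ) ≤ (N:ℤ))
        simp only [mul_neg_one] at this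
        omega
      have hq1 : q ≤ 1 := by
        by_contra hc
        push_neg at hc
        have h1 : 2 ≤ q := by omega
        have := mul_le_mul_of_nonneg_left h1 (by positivity : (0:ℤ) ≤ (N:ℤ))
        omega
      interval_cases q <;> (simp only [hd0def]; split <;> omega)
    · rintro rfl
      simp only [hd0def]
      split
      · exact ⟨0, by omega⟩
      · exact ⟨1, by omega⟩
  rw [Finset.sum_eq_single d0]
  · rw [if_pos ((hdvd_iff d0 hd0lt).mpr rfl)]
    have hexp : min d0 (N - d0) = min (((j.val : ℤ) - (j'.val : ℤ)).natAbs)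
        (N - (((j.val : ℤ) - (j'.val : ℤ)).natAbs)) := by
      simp only [hd0def]; split <;> omega
    rw [hexp]; ring
  · intro d hd hne
    rw [if_neg, mul_zero]
    intro hdvd
    exact hne ((hdvd_iff d (Finset.mem_range.mp hd)).mp hdvd)
  · intro h
    exact absurd (Finset.mem_range.mpr hd0lt) h

lemma relam_core (M : ℕ) (γ : ℝ) (h0 : 0 ≤ γ) (h1 : γ ≤ 1) (z : ℂ)
    (habs : ‖z‖ = γ) (hzN : z ^ (2 * M + 1) = ((γ : ℂ)) ^ (2 * M + 1)) :
    0 ≤ 1 + 2 * (∑ i ∈ Finset.range M, z ^ (i + 1)).re := by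
  by_cases hγ : γ = 0
  · have hz : z = 0 := by
      rw [hγ] at habs
      exact norm_eq_zero.mp habs
    simp [hz]
  have hγpos : 0 < γ := lt_of_le_of_ne h0 (Ne.symm hγ)
  have hzne : z ≠ 0 := by
    intro hc; rw [hc] at habs; simp at habs; exact hγ habs.symm
  by_cases hz1 : z = 1
  · simp [hz1]
    positivity
  set S : ℂ := ∑ i ∈ Finset.range M, z ^ (i + 1) with hSdef
  set u : ℂ := (starRingEnd ℂ) z with hudef
  have huz : z * u = ((γ : ℂ)) ^ 2 := by
    rw [hudef, Complex.mul_conj, Complex.normSq_eq_norm_sq, habs]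
    push_cast
    ring
  have hP : (S + 1) * (z - 1) = z ^ (M + 1) - 1 := by
    have := geom_sum_mul z (M + 1)
    rw [Finset.sum_range_succ'] at this
    simpa using this
  have hz1M : z ^ (M + 1) = (γ : ℂ) * u ^ M := by
    have hwne : z ^ M ≠ 0 := pow_ne_zero _ hzne
    apply mul_right_cancel₀ hwne
    have h2 : z ^ (M + 1) * z ^ M = z ^ (2 * M + 1) := by ring
    rw [h2, hzN]
    have : (γ : ℂ) * u ^ M * z ^ M = (γ : ℂ) * (u * z) ^ M := by ring
    rw [this, mul_comm u z, huz, ← pow_mul]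
    ring
  have hu1M : u ^ (M + 1) = (γ : ℂ) * z ^ M := by
    have := congrArg (starRingEnd ℂ) hz1M
    simpa [map_pow, Complex.conj_conj, hudef] using this
  have h2 : (1 + 2 * S) * (z - 1) = 2 * (γ : ℂ) * u ^ M - z - 1 := by
    linear_combination 2 * hP + 2 * hz1M
  have hE : (1 + 2 * S) * ((z - 1) * (u - 1)) =
      2 * (γ : ℂ) ^ 2 * z ^ M - 2 * (γ : ℂ) * u ^ M - (γ : ℂ) ^ 2 + z - u + 1 := by
    linear_combination (u - 1) * h2 + 2 * (γ : ℂ) * hu1M - huz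
  -- take real parts
  have hconj : u - 1 = (starRingEnd ℂ) (z - 1) := by rw [map_sub, map_one]
  have hLre : ((1 + 2 * S) * ((z - 1) * (u - 1))).re
      = (1 + 2 * S.re) * Complex.normSq (z - 1) := by
    rw [hconj, Complex.mul_conj]
    simp only [Complex.mul_re, Complex.add_re, Complex.add_im, Complex.ofReal_re,
      Complex.ofReal_im, Complex.one_re, Complex.one_im, Complex.mul_im,
      Complex.re_ofReal_mul, Complex.re_ofNat, Complex.im_ofNat]
    ring
  have hure : u.re = z.re := by simp [hudef]
  have huMre : (u ^ M).re = (z ^ M).re := by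
    have hpow : u ^ M = (starRingEnd ℂ) (z ^ M) := (map_pow _ _ _).symm
    rw [hpow, Complex.conj_re]
  have hRre : (2 * (γ : ℂ) ^ 2 * z ^ M - 2 * (γ : ℂ) * u ^ M - (γ : ℂ) ^ 2 + z - u + 1).re
      = (1 - γ) * (1 + γ - 2 * γ * (z ^ M).re) := by
    have hre2 : (((γ : ℂ)) ^ 2).re = γ ^ 2 := by
      rw [show ((γ : ℂ)) ^ 2 = ((γ ^ 2 : ℝ) : ℂ) by push_cast; ring, Complex.ofReal_re]
    have him2 : (((γ : ℂ)) ^ 2).im = 0 := by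
      rw [show ((γ : ℂ)) ^ 2 = ((γ ^ 2 : ℝ) : ℂ) by push_cast; ring, Complex.ofReal_im]
    simp only [Complex.sub_re, Complex.add_re, Complex.mul_re, Complex.ofReal_re,
      Complex.ofReal_im, Complex.one_re, Complex.re_ofNat, Complex.im_ofNat,
      Complex.mul_im, hre2, him2, huMre, hure]
    ring
  have hkey : (1 + 2 * S.re) * Complex.normSq (z - 1)
      = (1 - γ) * (1 + γ - 2 * γ * (z ^ M).re) := by
    rw [← hLre, ← hRre, hE]
  have habsM : ‖z ^ M‖ = γ ^ M := by rw [norm_pow, habs]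
  have hreM1 : (z ^ M).re ≤ γ ^ M := by
    rw [← habsM]; exact (abs_le.mp (Complex.abs_re_le_norm _)).2
  have hkey2 : 2 * γ ^ (M + 1) ≤ 1 + γ := key_pow_est γ h0 h1 (M + 1) (by omega)
  have hfac : 0 ≤ (1 - γ) * (1 + γ - 2 * γ * (z ^ M).re) := by
    apply mul_nonneg (by linarith)
    have : 2 * γ * (z ^ M).re ≤ 2 * γ * γ ^ M := by nlinarith
    have hgp : 2 * γ * γ ^ M = 2 * γ ^ (M + 1) := by ring
    linarith [hgp ▸ this]
  have hnsq : 0 < Complex.normSq (z - 1) := by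
    apply Complex.normSq_pos.mpr
    intro hc
    exact hz1 (by linear_combination hc)
  nlinarith [hkey, hfac, hnsq]

lemma orth_lemma' (N : ℕ) (ζ : ℂ) (hprim : IsPrimitiveRoot ζ N) (r : ℤ) :
    ∑ m ∈ Finset.range N, (ζ ^ r) ^ m = if (N : ℤ) ∣ r then (N : ℂ) else 0 := by
  by_cases h : (N : ℤ) ∣ r
  · rw [if_pos h, (hprim.zpow_eq_one_iff_dvd r).mpr h]
    simp
  · rw [if_neg h]
    have hne : ζ ^ r ≠ 1 := by
      intro hc; exact h ((hprim.zpow_eq_one_iff_dvd r).mp hc)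
    rw [geom_sum_eq hne]
    have : (ζ ^ r) ^ N = 1 := by
      rw [← zpow_natCast _ N, ← zpow_mul, mul_comm r (N : ℤ), zpow_mul, zpow_natCast,
        hprim.pow_eq_one, one_zpow]
    rw [this]; simp

lemma quad_nonneg (N M : ℕ) (hM : 1 ≤ M) (hNM : N = 2 * M + 1)
    (γ : ℝ) (h0 : 0 ≤ γ) (h1 : γ ≤ 1) (x : Fin N → ℝ) :
    0 ≤ ∑ j : Fin N, x j * ∑ j' : Fin N,
      γ ^ (min (((j.val : ℤ) - (j'.val : ℤ)).natAbs)
        (N - (((j.val : ℤ) - (j'.val : ℤ)).natAbs))) * x j' := by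
  have hN : 0 < N := by omega
  set ω : ℂ := Complex.exp (2 * Real.pi * Complex.I / N) with hωdef
  have hprim : IsPrimitiveRoot ω N := Complex.isPrimitiveRoot_exp N hN.ne'
  have hωN : ω ^ N = 1 := hprim.pow_eq_one
  have habsω : ‖ω‖ = 1 := by
    rw [hωdef, show (2 * (Real.pi : ℂ) * Complex.I / N)
        = ((2 * Real.pi / N : ℝ) : ℂ) * Complex.I by push_cast; ring,
      Complex.norm_exp]
    simp
  have hωne : ω ≠ 0 := by
    intro h; rw [h] at habsω; simp at habsω
  have hconjω : (starRingEnd ℂ) ω = ω⁻¹ := by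
    rw [Complex.inv_def, Complex.normSq_eq_norm_sq, habsω]
    simp
  set xhat : ℕ → ℂ := fun m => ∑ j : Fin N, (x j : ℂ) * (ω ^ (j.val : ℤ)) ^ m with hxhatdef
  set lam : ℕ → ℂ := fun m =>
    ∑ d ∈ Finset.range N, ((γ ^ min d (N - d) : ℝ) : ℂ) * (ω ^ (d : ℤ)) ^ m with hlamdef
  -- Step A : expansion of each summand into a triple sum
  have stepA : ∀ m : ℕ, lam m * (xhat m * (starRingEnd ℂ) (xhat m)) =
      ∑ j : Fin N, ∑ j' : Fin N, ∑ d ∈ Finset.range N,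
        ((γ ^ min d (N - d) : ℝ) : ℂ) * (x j : ℂ) * (x j' : ℂ) *
          (ω ^ ((d : ℤ) + (j.val : ℤ) - (j'.val : ℤ))) ^ m := by
    intro m
    have hconjxhat : (starRingEnd ℂ) (xhat m) =
        ∑ j' : Fin N, (x j' : ℂ) * ((ω ^ ((j'.val : ℤ)))⁻¹) ^ m := by
      rw [hxhatdef]
      simp only [map_sum, map_mul, Complex.conj_ofReal, map_pow, map_zpow₀, hconjω, inv_zpow]
    rw [hconjxhat, hlamdef, hxhatdef]
    simp only [Finset.mul_sum, Finset.sum_mul]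
    rw [Finset.sum_comm]
    refine Finset.sum_congr rfl fun j _ => ?_
    refine Finset.sum_congr rfl fun j' _ => ?_
    refine Finset.sum_congr rfl fun d _ => ?_
    rw [show ((d : ℤ) + (j.val : ℤ) - (j'.val : ℤ))
        = (d : ℤ) + ((j.val : ℤ) + (-(j'.val : ℤ))) by ring,
      zpow_add₀ hωne, zpow_add₀ hωne, zpow_neg, mul_pow, mul_pow]
    ring
  -- Step B : sum over m and use orthogonality
  have stepB : ∑ m ∈ Finset.range N, lam m * (xhat m * (starRingEnd ℂ) (xhat m)) =
      (N : ℂ) * ∑ j : Fin N, ∑ j' : Fin N,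
        (x j : ℂ) * ((γ ^ (min (((j.val : ℤ) - (j'.val : ℤ)).natAbs)
          (N - (((j.val : ℤ) - (j'.val : ℤ)).natAbs))) : ℝ) : ℂ) * (x j' : ℂ) := by
    calc ∑ m ∈ Finset.range N, lam m * (xhat m * (starRingEnd ℂ) (xhat m))
        = ∑ m ∈ Finset.range N, ∑ j : Fin N, ∑ j' : Fin N, ∑ d ∈ Finset.range N,
            ((γ ^ min d (N - d) : ℝ) : ℂ) * (x j : ℂ) * (x j' : ℂ) *
              (ω ^ ((d : ℤ) + (j.val : ℤ) - (j'.val : ℤ))) ^ m :=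
          Finset.sum_congr rfl fun m _ => stepA m
      _ = ∑ j : Fin N, ∑ j' : Fin N, ∑ d ∈ Finset.range N, ∑ m ∈ Finset.range N,
            ((γ ^ min d (N - d) : ℝ) : ℂ) * (x j : ℂ) * (x j' : ℂ) *
              (ω ^ ((d : ℤ) + (j.val : ℤ) - (j'.val : ℤ))) ^ m := by
          rw [Finset.sum_comm (s := Finset.range N) (t := (Finset.univ : Finset (Fin N)))]
          refine Finset.sum_congr rfl fun j _ => ?_
          rw [Finset.sum_comm (s := Finset.range N) (t := (Finset.univ : Finset (Fin N)))]
          refine Finset.sum_congr rfl fun j' _ => ?_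
          rw [Finset.sum_comm (s := Finset.range N) (t := Finset.range N)]
      _ = ∑ j : Fin N, ∑ j' : Fin N, ∑ d ∈ Finset.range N,
            (x j : ℂ) * (x j' : ℂ) * (((γ ^ min d (N - d) : ℝ) : ℂ) *
              (if (N : ℤ) ∣ ((d : ℤ) + j.val - j'.val) then (N : ℂ) else 0)) := by
          refine Finset.sum_congr rfl fun j _ => ?_
          refine Finset.sum_congr rfl fun j' _ => ?_
          refine Finset.sum_congr rfl fun d _ => ?_
          rw [← Finset.mul_sum, orth_lemma' N ω hprim ((d : ℤ) + (j.val : ℤ) - (j'.val : ℤ))]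
          ring
      _ = ∑ j : Fin N, ∑ j' : Fin N, (x j : ℂ) * (x j' : ℂ) *
            ((N : ℂ) * ((γ ^ (min (((j.val : ℤ) - (j'.val : ℤ)).natAbs)
              (N - (((j.val : ℤ) - (j'.val : ℤ)).natAbs))) : ℝ) : ℂ)) := by
          refine Finset.sum_congr rfl fun j _ => ?_
          refine Finset.sum_congr rfl fun j' _ => ?_
          rw [← Finset.mul_sum, pair_lemma N hN γ j j']
      _ = (N : ℂ) * ∑ j : Fin N, ∑ j' : Fin N,
            (x j : ℂ) * ((γ ^ (min (((j.val : ℤ) - (j'.val : ℤ)).natAbs)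
              (N - (((j.val : ℤ) - (j'.val : ℤ)).natAbs))) : ℝ) : ℂ) * (x j' : ℂ) := by
          rw [Finset.mul_sum]
          refine Finset.sum_congr rfl fun j _ => ?_
          rw [Finset.mul_sum]
          refine Finset.sum_congr rfl fun j' _ => ?_
          ring
  -- nonnegativity of the real part of each eigenvalue
  have hlamre : ∀ m : ℕ, 0 ≤ (lam m).re := by
    intro m
    set z : ℂ := (γ : ℂ) * ω ^ m with hzdef
    have habsz : ‖z‖ = γ := by
      rw [hzdef, norm_mul, norm_pow, habsω, Complex.norm_real, Real.norm_eq_abs, _root_.abs_of_nonneg h0]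
      simp
    have hzN : z ^ (2 * M + 1) = ((γ : ℂ)) ^ (2 * M + 1) := by
      rw [hzdef, mul_pow, pow_right_comm, ← hNM, hωN, one_pow, mul_one]
    have hsplit : ∀ g : ℕ → ℂ, ∑ i ∈ Finset.range (2 * M), g i
        = ∑ i ∈ Finset.range M, g i + ∑ i ∈ Finset.range M, g (M + i) := by
      intro g; rw [two_mul, Finset.sum_range_add]
    have hS : lam m = 1 + (∑ i ∈ Finset.range M, z ^ (i + 1))
        + (starRingEnd ℂ) (∑ i ∈ Finset.range M, z ^ (i + 1)) := by
      rw [hlamdef]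
      simp only [hNM]
      rw [Finset.sum_range_succ', hsplit]
      have hfirst : ∀ i ∈ Finset.range M,
          ((γ ^ min (i + 1) (2 * M + 1 - (i + 1)) : ℝ) : ℂ) * (ω ^ ((i + 1 : ℕ) : ℤ)) ^ m
            = z ^ (i + 1) := by
        intro i hi
        have hiM : i < M := Finset.mem_range.mp hi
        rw [show min (i + 1) (2 * M + 1 - (i + 1)) = i + 1 by omega,
          hzdef, mul_pow, zpow_natCast, pow_right_comm]
        push_cast
        ring
      have hsecond : ∀ i ∈ Finset.range M,
          ((γ ^ min (M + i + 1) (2 * M + 1 - (M + i + 1)) : ℝ) : ℂ)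
            * (ω ^ ((M + i + 1 : ℕ) : ℤ)) ^ m
            = (starRingEnd ℂ) (z ^ (M - i)) := by
        intro i hi
        have hiM : i < M := Finset.mem_range.mp hi
        obtain ⟨k, hk⟩ := Nat.exists_eq_add_of_lt hiM
        have hzconj : (starRingEnd ℂ) (z ^ (M - i))
            = ((γ : ℝ) : ℂ) ^ (M - i) * ((ω ^ m) ^ (M - i))⁻¹ := by
          simp only [hzdef, mul_pow, map_mul, map_pow, Complex.conj_ofReal, hconjω, inv_pow]
        rw [hzconj, show min (M + i + 1) (2 * M + 1 - (M + i + 1)) = M - i by omega]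
        rw [zpow_natCast, ← pow_mul, Complex.ofReal_pow]
        congr 1
        apply eq_inv_of_mul_eq_one_left
        rw [← pow_mul, ← pow_add]
        have hexp : (M + i + 1) * m + m * (M - i) = N * m := by
          have h' : M - i = k + 1 := by omega
          rw [h', hNM, hk]; ring
        rw [hexp, pow_mul, hωN, one_pow]
      rw [Finset.sum_congr rfl hfirst, Finset.sum_congr rfl hsecond]
      rw [show ∑ i ∈ Finset.range M, (starRingEnd ℂ) (z ^ (M - i))
          = (starRingEnd ℂ) (∑ i ∈ Finset.range M, z ^ (i + 1)) by
        rw [map_sum]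
        calc ∑ i ∈ Finset.range M, (starRingEnd ℂ) (z ^ (M - i))
            = ∑ i ∈ Finset.range M, (starRingEnd ℂ) (z ^ (M - 1 - i + 1)) :=
              Finset.sum_congr rfl fun i hi => by
                have hiM := Finset.mem_range.mp hi
                congr 2
                omega
          _ = ∑ i ∈ Finset.range M, (starRingEnd ℂ) (z ^ (i + 1)) :=
              Finset.sum_range_reflect (fun j => (starRingEnd ℂ) (z ^ (j + 1))) M]
      norm_num
      ring
    have hcore := relam_core M γ h0 h1 z habsz hzN
    rw [hS]
    have hconjre : ((starRingEnd ℂ) (∑ i ∈ Finset.range M, z ^ (i + 1))).re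
        = (∑ i ∈ Finset.range M, z ^ (i + 1)).re := Complex.conj_re _
    simp only [Complex.add_re, Complex.one_re, hconjre]
    linarith [hcore]
  -- conclusion: take real parts
  set Q : ℝ := ∑ j : Fin N, x j * ∑ j' : Fin N,
      γ ^ (min (((j.val : ℤ) - (j'.val : ℤ)).natAbs)
        (N - (((j.val : ℤ) - (j'.val : ℤ)).natAbs))) * x j' with hQdef
  have hQC : ((Q : ℝ) : ℂ) = ∑ j : Fin N, ∑ j' : Fin N,
      (x j : ℂ) * ((γ ^ (min (((j.val : ℤ) - (j'.val : ℤ)).natAbs)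
        (N - (((j.val : ℤ) - (j'.val : ℤ)).natAbs))) : ℝ) : ℂ) * (x j' : ℂ) := by
    rw [hQdef]
    push_cast
    refine Finset.sum_congr rfl fun j _ => ?_
    rw [Finset.mul_sum]
    refine Finset.sum_congr rfl fun j' _ => ?_
    ring
  have hfinal : (N : ℝ) * Q = ∑ m ∈ Finset.range N, (lam m).re * Complex.normSq (xhat m) := by
    have h1 : ((N : ℝ) * Q : ℝ) = ((((N : ℝ) * Q : ℝ) : ℂ)).re := (Complex.ofReal_re _).symm
    rw [h1, show ((((N : ℝ) * Q : ℝ)) : ℂ) = (N : ℂ) * ((Q : ℝ) : ℂ) by push_cast; ring,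
      hQC, ← stepB, Complex.re_sum]
    refine Finset.sum_congr rfl fun m _ => ?_
    rw [Complex.mul_conj, mul_comm, Complex.re_ofReal_mul]
    exact mul_comm _ _
  have hsum_nonneg : 0 ≤ ∑ m ∈ Finset.range N, (lam m).re * Complex.normSq (xhat m) :=
    Finset.sum_nonneg fun m _ => mul_nonneg (hlamre m) (Complex.normSq_nonneg _)
  have hNQ : 0 ≤ (N : ℝ) * Q := hfinal ▸ hsum_nonneg
  have hNpos : (0 : ℝ) < N := by exact_mod_cast hN
  calc (0 : ℝ) ≤ ((N : ℝ) * Q) / N := div_nonneg hNQ hNpos.le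
    _ = Q := by field_simp


/-- For odd `N ≥ 3` and `0 ≤ γ ≤ 1`, the circulant matrix with
entries `Γ_{ij} = γ^{min(|i−j|, N−|i−j|)}` is positive semidefinite.
(Key estimates: `1 + γ ≥ 2γ^{(N+1)/2}` with equality only at `γ = 1`, and
`1 + γ² − 2γ cos θ ≥ (1−γ)² ≥ 0`.) -/
theorem ring_exponential_posSemidef (N : ℕ) (hN : 3 ≤ N) (hodd : Odd N)
    (γ : ℝ) (h0 : 0 ≤ γ) (h1 : γ ≤ 1)
    (Γ : Matrix (Fin N) (Fin N) ℝ)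
    (hΓ : Γ = Matrix.of fun i j : Fin N =>
      γ ^ (min (((i.val : ℤ) - (j.val : ℤ)).natAbs)
        (N - (((i.val : ℤ) - (j.val : ℤ)).natAbs)))) :
    Γ.PosSemidef ∧
    2 * γ ^ ((N + 1) / 2) ≤ 1 + γ ∧
    (1 + γ = 2 * γ ^ ((N + 1) / 2) → γ = 1) ∧
    (∀ θ : ℝ, (1 - γ) ^ 2 ≤ 1 + γ ^ 2 - 2 * γ * Real.cos θ) := by

  obtain ⟨M, hNM⟩ : ∃ M, N = 2 * M + 1 := by
    obtain ⟨k, hk⟩ := hodd; exact ⟨k, by omega⟩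
  have hM : 1 ≤ M := by omega
  have hhalf : (N + 1) / 2 = M + 1 := by omega
  refine ⟨⟨?_, ?_⟩, ?_, ?_, ?_⟩
  · -- Hermitian
    rw [hΓ]
    ext i j
    simp only [Matrix.conjTranspose_apply, Matrix.of_apply, star_trivial]
    congr 1
    omega
  · -- quadratic form
    intro x
    rw [hΓ]
    have hq := quad_nonneg N M hM hNM γ h0 h1 ⇑x
    simpa [Matrix.mulVec, dotProduct, Matrix.of_apply, star_trivial, Finsupp.sum_fintype, Finset.mul_sum, mul_assoc] using hq
  · rw [hhalf]
    exact key_pow_est γ h0 h1 (M + 1) (by omega)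
  · rw [hhalf]
    intro heq
    by_contra hne
    have hlt : γ < 1 := lt_of_le_of_ne h1 hne
    have hp : γ ^ (M + 1) ≤ γ := pow_le_of_le_one h0 h1 (by omega)
    linarith
  · intro θ
    nlinarith [mul_nonneg h0 (sub_nonneg.mpr (Real.cos_le_one θ))]
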